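/- Let δ be an expansion function on L and φ : L → L a function with φ(a) ≤ a for all a ∈ L such that x ≤ y implies φ(x) ≤ φ(y) for all x, y ∈ L. Let {p_i : i ∈ Δ} be a nonempty family of φ-δ-primary elements of L that is totally ordered (a chain). Then p = ⋁_{i ∈ Δ} p_i is also φ-δ-primary. -/

import Mathlib

open CompleteLattice

variable {L : Type*} [CompleteLattice L] [CommMonoid L]

/-- The compact elements of a complete lattice, with the definition Mathlib used in December 2024. -/
def CompleteLattice.IsCompactElement {α : Type*} [CompleteLattice α] (k : α) : Prop :=
  ∀ s : Set α, k ≤ sSup s → ∃ t : Finset α, ↑t ⊆ s ∧ k ≤ t.sup id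

/-- `L` is a compactly generated multiplicative lattice: multiplication distributes over
arbitrary joins, the top element is the multiplicative identity, `1` is a compact element,
every element is a join of compact elements, and products of compact elements are compact. -/
def IsCGMultLattice (L : Type*) [CompleteLattice L] [CommMonoid L] : Prop :=
  (∀ (a : L) (S : Set L), a * sSup S = ⨆ b ∈ S, a * b) ∧
  ((1 : L) = ⊤) ∧
  CompleteLattice.IsCompactElement (1 : L) ∧
  (∀ a : L, a = sSup {x : L | CompleteLattice.IsCompactElement x ∧ x ≤ a}) ∧
  (∀ x y : L, CompleteLattice.IsCompactElement x → CompleteLattice.IsCompactElement y →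
    CompleteLattice.IsCompactElement (x * y))

/-- An expansion function on `L`: `a ≤ δ a` and `δ` is monotone. -/
def IsExpansion (δ : L → L) : Prop :=
  (∀ a : L, a ≤ δ a) ∧ ∀ a b : L, a ≤ b → δ a ≤ δ b

/-- A proper element `p` is `φ`-`δ`-primary if `a*b ≤ p` and `a*b ≰ φ p` imply
`a ≤ p` or `b ≤ δ p`. -/
def IsPhiDeltaPrimary (φ δ : L → L) (p : L) : Prop :=
  p < 1 ∧ ∀ a b : L, a * b ≤ p → ¬ a * b ≤ φ p → a ≤ p ∨ b ≤ δ p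

/-- A proper element `p` is `δ`-primary if `a*b ≤ p` implies `a ≤ p` or `b ≤ δ p`. -/
def IsDeltaPrimary (δ : L → L) (p : L) : Prop :=
  p < 1 ∧ ∀ a b : L, a * b ≤ p → a ≤ p ∨ b ≤ δ p

/-- A proper element `p` is `φ`-prime if `a*b ≤ p` and `a*b ≰ φ p` imply
`a ≤ p` or `b ≤ p`. -/
def IsPhiPrime (φ : L → L) (p : L) : Prop :=
  p < 1 ∧ ∀ a b : L, a * b ≤ p → ¬ a * b ≤ φ p → a ≤ p ∨ b ≤ p

/-- The residual `(a : b)`, the join of all `x` with `x * b ≤ a`. -/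
def lres (a b : L) : L := sSup {x : L | x * b ≤ a}

/-- The radical `√a`, the join of all compact `x` with `x ^ n ≤ a` for some `n ≥ 1`. -/
def lradical (a : L) : L :=
  sSup {x : L | CompleteLattice.IsCompactElement x ∧ ∃ n : ℕ, 0 < n ∧ x ^ n ≤ a}

/-- A principal element of a multiplicative lattice. -/
def IsPrincipalElem (e : L) : Prop :=
  ∀ a b : L, a ⊓ b * e = (lres a e ⊓ b) * e ∧ lres (a * e ⊔ b) e = lres b e ⊔ a

/-- A Noether lattice: modular, principally generated, satisfying the ascending
chain condition. -/
def IsNoetherLattice (L : Type*) [CompleteLattice L] [CommMonoid L] : Prop :=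
  IsModularLattice L ∧ (∀ a : L, a = sSup {e : L | IsPrincipalElem e ∧ e ≤ a}) ∧
  WellFoundedGT L

/-- A maximal element: proper, and `m < x ≤ 1` implies `x = 1`. -/
def IsMaximalElem (m : L) : Prop :=
  m < 1 ∧ ∀ x : L, m < x → x ≤ 1 → x = 1

lemma compact_sup {x y : L} (hx : CompleteLattice.IsCompactElement x)
    (hy : CompleteLattice.IsCompactElement y) :
    CompleteLattice.IsCompactElement (x ⊔ y) := by
  unfold CompleteLattice.IsCompactElement at hx hy ⊢
  rw [← CompleteLattice.isCompactElement_iff_exists_le_sSup_of_le_sSup,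
    CompleteLattice.isCompactElement_iff_le_of_directed_sSup_le] at hx hy ⊢
  intro s hne hdir hle
  obtain ⟨u, hu, hxu⟩ := hx s hne hdir (le_trans le_sup_left hle)
  obtain ⟨v, hv, hyv⟩ := hy s hne hdir (le_trans le_sup_right hle)
  obtain ⟨w, hw, huw, hvw⟩ := hdir u hu v hv
  exact ⟨w, hw, sup_le (hxu.trans huw) (hyv.trans hvw)⟩

theorem chain_sup_phiDeltaPrimary {ι : Type*} [Nonempty ι]
    (hL : IsCGMultLattice L) (δ φ : L → L) (hδ : IsExpansion δ)
    (hφ : ∀ a : L, φ a ≤ a) (hφmono : ∀ x y : L, x ≤ y → φ x ≤ φ y)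
    (p : ι → L) (hp : ∀ i : ι, IsPhiDeltaPrimary φ δ (p i))
    (hchain : ∀ i j : ι, p i ≤ p j ∨ p j ≤ p i) :
    IsPhiDeltaPrimary φ δ (⨆ i : ι, p i) := by
  obtain ⟨hdist, hone, hcompone, hcg, hcmul⟩ := hL
  set P : L := ⨆ i : ι, p i with hP
  -- multiplication is monotone
  have hmono : ∀ a b c : L, b ≤ c → a * b ≤ a * c := by
    intro a b c h
    calc a * b ≤ ⨆ x ∈ ({b, c} : Set L), a * x := le_biSup _ (by simp)
      _ = a * sSup {b, c} := (hdist a _).symm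
      _ = a * c := by rw [sSup_pair, sup_eq_right.mpr h]
  have hmono2 : ∀ a b c d : L, a ≤ b → c ≤ d → a * c ≤ b * d := by
    intro a b c d h1 h2
    calc a * c ≤ a * d := hmono a c d h2
      _ = d * a := mul_comm a d
      _ ≤ d * b := hmono d a b h1
      _ = b * d := mul_comm d b
  -- directedness of range p
  have hdirp : DirectedOn (· ≤ ·) (Set.range p) := by
    rintro - ⟨i, rfl⟩ - ⟨j, rfl⟩
    rcases hchain i j with h | h
    · exact ⟨p j, ⟨j, rfl⟩, h, le_rfl⟩
    · exact ⟨p i, ⟨i, rfl⟩, le_rfl, h⟩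
  have hnerange : (Set.range p).Nonempty := Set.range_nonempty p
  have hsuprange : sSup (Set.range p) = P := by rw [hP, iSup]
  -- compact elements below P are below some p i
  have hkey : ∀ z : L, CompleteLattice.IsCompactElement z → z ≤ P → ∃ i, z ≤ p i := by
    intro z hz hzP
    unfold CompleteLattice.IsCompactElement at hz
    rw [← CompleteLattice.isCompactElement_iff_exists_le_sSup_of_le_sSup,
      CompleteLattice.isCompactElement_iff_le_of_directed_sSup_le] at hz
    obtain ⟨-, ⟨i, rfl⟩, hi⟩ := hz (Set.range p) hnerange hdirp (by rw [hsuprange]; exact hzP)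
    exact ⟨i, hi⟩
  -- P is proper
  have hPlt : P < 1 := by
    have hPle : P ≤ 1 := iSup_le fun i => (hp i).1.le
    rcases lt_or_eq_of_le hPle with h | h
    · exact h
    · obtain ⟨i, hi⟩ := hkey 1 hcompone h.ge
      exact absurd (lt_of_lt_of_le (hp i).1 hi) (lt_irrefl _)
  refine ⟨hPlt, fun a b habP hnab => ?_⟩
  by_cases haP : a ≤ P
  · exact Or.inl haP
  right
  -- decompose a * b as a sup of compact products
  set Sa := {x : L | CompleteLattice.IsCompactElement x ∧ x ≤ a} with hSa
  set Sb := {y : L | CompleteLattice.IsCompactElement y ∧ y ≤ b} with hSb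
  have hdecomp : a * b = ⨆ x ∈ Sa, ⨆ y ∈ Sb, x * y := by
    conv_lhs => rw [hcg a, hcg b]
    rw [mul_comm, hdist]
    refine biSup_congr fun x hx => ?_
    rw [mul_comm, hdist]
  -- find compact x0 ≤ a, y0 ≤ b with x0 * y0 ≰ φ P
  have hexists : ∃ x0 ∈ Sa, ∃ y0 ∈ Sb, ¬ x0 * y0 ≤ φ P := by
    by_contra h
    push_neg at h
    apply hnab
    rw [hdecomp]
    exact iSup₂_le fun x hx => iSup₂_le fun y hy => h x hx y hy
  obtain ⟨x0, hx0, y0, hy0, hxy0⟩ := hexists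
  -- find compact x1 ≤ a with x1 ≰ P
  have hexx1 : ∃ x1 ∈ Sa, ¬ x1 ≤ P := by
    by_contra h
    push_neg at h
    exact haP (by rw [hcg a]; exact sSup_le fun x hx => h x hx)
  obtain ⟨x1, hx1, hx1P⟩ := hexx1
  set x := x0 ⊔ x1 with hxdef
  have hxc : CompleteLattice.IsCompactElement x := compact_sup hx0.1 hx1.1
  have hxa : x ≤ a := sup_le hx0.2 hx1.2
  have hxP : ¬ x ≤ P := fun h => hx1P (le_sup_right.trans h)
  -- show every compact y ≤ b satisfies y ≤ δ P
  rw [hcg b]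
  refine sSup_le fun y hy => ?_
  set y' := y ⊔ y0 with hy'def
  have hy'c : CompleteLattice.IsCompactElement y' := compact_sup hy.1 hy0.1
  have hy'b : y' ≤ b := sup_le hy.2 hy0.2
  have hzc : CompleteLattice.IsCompactElement (x * y') := hcmul x y' hxc hy'c
  have hzP : x * y' ≤ P := le_trans (hmono2 x a y' b hxa hy'b) habP
  obtain ⟨i, hi⟩ := hkey (x * y') hzc hzP
  have hx0y0 : x0 * y0 ≤ x * y' := hmono2 x0 x y0 y' le_sup_left le_sup_right
  have hnz : ¬ x * y' ≤ φ (p i) := fun h =>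
    hxy0 (le_trans hx0y0 (h.trans (hφmono _ _ (le_iSup p i))))
  rcases (hp i).2 x y' hi hnz with h | h
  · exact absurd (h.trans (le_iSup p i)) hxP
  · exact le_trans le_sup_left (h.trans (hδ.2 _ _ (le_iSup p i)))
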